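/- The reduction bias formula: under the setup above, E[Y(1)] - E[Y(0)] - (E[T·Y(1)/e_d(X)] - E[(1-T)·Y(0)/(1-e_d(X))]) = -E[Cov(Y(1),T|d(X))/e_d(X) + Cov(Y(0),T|d(X))/(1-e_d(X))]. -/

import Mathlib

open MeasureTheory ProbabilityTheory

/-- Conditional covariance given a sub-σ-algebra `m`:
`Cov(A, B | m) = E[A·B | m] - E[A | m] · E[B | m]`. -/
noncomputable def condCov {Ω : Type*} [mΩ : MeasurableSpace Ω] (μ : Measure Ω)
    (m : MeasurableSpace Ω) (A B : Ω → ℝ) : Ω → ℝ :=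
  fun ω => condExp m μ (fun ω' => A ω' * B ω') ω - condExp m μ A ω * condExp m μ B ω

/-- Reduction bias formula:
`E[Y(1)] - E[Y(0)] - (E[T·Y(1)/e_d(X)] - E[(1-T)·Y(0)/(1-e_d(X))])`
` = -E[Cov(Y(1),T|d(X))/e_d(X) + Cov(Y(0),T|d(X))/(1-e_d(X))]`. -/
theorem reduction_bias_formula
    {Ω α β : Type*} [MeasurableSpace Ω] [MeasurableSpace α] [MeasurableSpace β]
    (μ : Measure Ω) [IsProbabilityMeasure μ]
    (X : Ω → α) (d : α → β) (T Y0 Y1 : Ω → ℝ)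
    (hX : Measurable X) (hd : Measurable d)
    (hT01 : ∀ ω, T ω = 0 ∨ T ω = 1)
    (hY0 : MemLp Y0 2 μ) (hY1 : MemLp Y1 2 μ) (hT : MemLp T 2 μ)
    (ed : Ω → ℝ)
    (h_ed : ed = condExp (MeasurableSpace.comap (d ∘ X) inferInstance) μ T)
    (h_pos : ∀ᵐ ω ∂μ, 0 < ed ω ∧ ed ω < 1)
    (hInt1 : Integrable (fun ω => T ω * Y1 ω / ed ω) μ)
    (hInt2 : Integrable (fun ω => (1 - T ω) * Y0 ω / (1 - ed ω)) μ)
    (hInt3 : Integrable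
      (fun ω => condCov μ (MeasurableSpace.comap (d ∘ X) inferInstance) Y1 T ω / ed ω) μ)
    (hInt4 : Integrable
      (fun ω => condCov μ (MeasurableSpace.comap (d ∘ X) inferInstance) Y0 T ω / (1 - ed ω)) μ) :
    (∫ ω, Y1 ω ∂μ) - (∫ ω, Y0 ω ∂μ)
      - ((∫ ω, T ω * Y1 ω / ed ω ∂μ) - ∫ ω, (1 - T ω) * Y0 ω / (1 - ed ω) ∂μ)
      = -∫ ω, (condCov μ (MeasurableSpace.comap (d ∘ X) inferInstance) Y1 T ω / ed ω
          + condCov μ (MeasurableSpace.comap (d ∘ X) inferInstance) Y0 T ω / (1 - ed ω)) ∂μ := by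
  classical
  have hm : (MeasurableSpace.comap (d ∘ X) inferInstance) ≤ ‹MeasurableSpace Ω› := (hd.comp hX).comap_le
  haveI : SigmaFinite (μ.trim hm) := inferInstance
  have hedm : StronglyMeasurable[(MeasurableSpace.comap (d ∘ X) inferInstance)] ed := h_ed ▸ stronglyMeasurable_condExp
  have hT_int : Integrable T μ := hT.integrable one_le_two
  have hY1_int : Integrable Y1 μ := hY1.integrable one_le_two
  have hY0_int : Integrable Y0 μ := hY0.integrable one_le_two
  have hTabs : ∀ ω, |T ω| ≤ 1 := by
    intro ω; rcases hT01 ω with h | h <;> simp [h]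
  have hTY1_int : Integrable (fun ω => T ω * Y1 ω) μ := by
    refine hY1_int.norm.mono' (hT.aestronglyMeasurable.mul hY1.aestronglyMeasurable) ?_
    filter_upwards with ω
    calc ‖T ω * Y1 ω‖ = |T ω| * ‖Y1 ω‖ := by rw [norm_mul]; rfl
    _ ≤ 1 * ‖Y1 ω‖ := by gcongr; exact hTabs ω
    _ = ‖Y1 ω‖ := one_mul _
  have hTY0_int : Integrable (fun ω => T ω * Y0 ω) μ := by
    refine hY0_int.norm.mono' (hT.aestronglyMeasurable.mul hY0.aestronglyMeasurable) ?_
    filter_upwards with ω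
    calc ‖T ω * Y0 ω‖ = |T ω| * ‖Y0 ω‖ := by rw [norm_mul]; rfl
    _ ≤ 1 * ‖Y0 ω‖ := by gcongr; exact hTabs ω
    _ = ‖Y0 ω‖ := one_mul _
  -- first key identity
  have key1 : (∫ ω, T ω * Y1 ω / ed ω ∂μ)
      = (∫ ω, condCov μ (MeasurableSpace.comap (d ∘ X) inferInstance) Y1 T ω / ed ω ∂μ) + ∫ ω, Y1 ω ∂μ := by
    set g : Ω → ℝ := fun ω => (ed ω)⁻¹ with hg_def
    set f : Ω → ℝ := fun ω => T ω * Y1 ω with hf_def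
    have hg : StronglyMeasurable[(MeasurableSpace.comap (d ∘ X) inferInstance)] g :=
      (Measurable.inv hedm.measurable).stronglyMeasurable
    have hfc : (fun ω => T ω * Y1 ω / ed ω) = g * f := by
      funext ω; simp [hg_def, hf_def, div_eq_mul_inv, mul_comm]
    have hgf_int : Integrable (g * f) μ := hfc ▸ hInt1
    have hcond : condExp (MeasurableSpace.comap (d ∘ X) inferInstance) μ (g * f) =ᵐ[μ] g * condExp (MeasurableSpace.comap (d ∘ X) inferInstance) μ f :=
      condExp_mul_of_stronglyMeasurable_left hg hgf_int hTY1_int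
    have hcomm : f = fun ω => Y1 ω * T ω := by funext ω; exact mul_comm _ _
    have heq : g * condExp (MeasurableSpace.comap (d ∘ X) inferInstance) μ f
        =ᵐ[μ] fun ω => condCov μ (MeasurableSpace.comap (d ∘ X) inferInstance) Y1 T ω / ed ω + condExp (MeasurableSpace.comap (d ∘ X) inferInstance) μ Y1 ω := by
      filter_upwards [h_pos] with ω hω
      have hne : ed ω ≠ 0 := ne_of_gt hω.1
      have hT_eq : condExp (MeasurableSpace.comap (d ∘ X) inferInstance) μ T ω = ed ω := by rw [h_ed]
      have hfv : condExp (MeasurableSpace.comap (d ∘ X) inferInstance) μ f ω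
          = condCov μ (MeasurableSpace.comap (d ∘ X) inferInstance) Y1 T ω + condExp (MeasurableSpace.comap (d ∘ X) inferInstance) μ Y1 ω * ed ω := by
        rw [hcomm]
        simp only [condCov, hT_eq]
        ring
      show g ω * condExp (MeasurableSpace.comap (d ∘ X) inferInstance) μ f ω = _
      rw [hfv, hg_def]
      field_simp
    calc (∫ ω, T ω * Y1 ω / ed ω ∂μ) = ∫ ω, (g * f) ω ∂μ := by rw [hfc]
    _ = ∫ ω, condExp (MeasurableSpace.comap (d ∘ X) inferInstance) μ (g * f) ω ∂μ := (integral_condExp hm).symm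
    _ = ∫ ω, (condCov μ (MeasurableSpace.comap (d ∘ X) inferInstance) Y1 T ω / ed ω + condExp (MeasurableSpace.comap (d ∘ X) inferInstance) μ Y1 ω) ∂μ :=
        integral_congr_ae (hcond.trans heq)
    _ = (∫ ω, condCov μ (MeasurableSpace.comap (d ∘ X) inferInstance) Y1 T ω / ed ω ∂μ) + ∫ ω, condExp (MeasurableSpace.comap (d ∘ X) inferInstance) μ Y1 ω ∂μ :=
        integral_add hInt3 integrable_condExp
    _ = (∫ ω, condCov μ (MeasurableSpace.comap (d ∘ X) inferInstance) Y1 T ω / ed ω ∂μ) + ∫ ω, Y1 ω ∂μ := by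
        rw [integral_condExp hm]
  -- second key identity
  have key2 : (∫ ω, (1 - T ω) * Y0 ω / (1 - ed ω) ∂μ)
      = (∫ ω, Y0 ω ∂μ) - ∫ ω, condCov μ (MeasurableSpace.comap (d ∘ X) inferInstance) Y0 T ω / (1 - ed ω) ∂μ := by
    set g : Ω → ℝ := fun ω => (1 - ed ω)⁻¹ with hg_def
    set f : Ω → ℝ := fun ω => (1 - T ω) * Y0 ω with hf_def
    have hg : StronglyMeasurable[(MeasurableSpace.comap (d ∘ X) inferInstance)] g :=
      ((stronglyMeasurable_const.sub hedm).measurable.inv).stronglyMeasurable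
    have hf_int : Integrable f μ := by
      refine hY0_int.norm.mono'
        (((aestronglyMeasurable_const).sub hT.aestronglyMeasurable).mul
          hY0.aestronglyMeasurable) ?_
      filter_upwards with ω
      have h1 : |1 - T ω| ≤ 1 := by rcases hT01 ω with h | h <;> simp [h]
      calc ‖(1 - T ω) * Y0 ω‖ = |1 - T ω| * ‖Y0 ω‖ := by rw [norm_mul]; rfl
      _ ≤ 1 * ‖Y0 ω‖ := by gcongr
      _ = ‖Y0 ω‖ := one_mul _
    have hfc : (fun ω => (1 - T ω) * Y0 ω / (1 - ed ω)) = g * f := by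
      funext ω; simp [hg_def, hf_def, div_eq_mul_inv, mul_comm]
    have hgf_int : Integrable (g * f) μ := hfc ▸ hInt2
    have hcond : condExp (MeasurableSpace.comap (d ∘ X) inferInstance) μ (g * f) =ᵐ[μ] g * condExp (MeasurableSpace.comap (d ∘ X) inferInstance) μ f :=
      condExp_mul_of_stronglyMeasurable_left hg hgf_int hf_int
    have hsub : f = (fun ω => Y0 ω) - fun ω => T ω * Y0 ω := by
      funext ω; simp [hf_def]; ring
    have hcsub : condExp (MeasurableSpace.comap (d ∘ X) inferInstance) μ f =ᵐ[μ]
        condExp (MeasurableSpace.comap (d ∘ X) inferInstance) μ (fun ω => Y0 ω) - condExp (MeasurableSpace.comap (d ∘ X) inferInstance) μ (fun ω => T ω * Y0 ω) := by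
      rw [hsub]; exact condExp_sub hY0_int hTY0_int _
    have heq : g * condExp (MeasurableSpace.comap (d ∘ X) inferInstance) μ f
        =ᵐ[μ] fun ω => condExp (MeasurableSpace.comap (d ∘ X) inferInstance) μ Y0 ω - condCov μ (MeasurableSpace.comap (d ∘ X) inferInstance) Y0 T ω / (1 - ed ω) := by
      filter_upwards [h_pos, hcsub] with ω hω hcs
      have hne : (1 : ℝ) - ed ω ≠ 0 := sub_ne_zero.mpr hω.2.ne'
      have hT_eq : condExp (MeasurableSpace.comap (d ∘ X) inferInstance) μ T ω = ed ω := by rw [h_ed]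
      have hTY0comm : condExp (MeasurableSpace.comap (d ∘ X) inferInstance) μ (fun ω => T ω * Y0 ω)
          = condExp (MeasurableSpace.comap (d ∘ X) inferInstance) μ (fun ω' => Y0 ω' * T ω') := by
        have h' : (fun ω => T ω * Y0 ω) = (fun ω' => Y0 ω' * T ω') := by
          funext ω'; exact mul_comm _ _
        rw [h']
      have hfv : condExp (MeasurableSpace.comap (d ∘ X) inferInstance) μ f ω
          = condExp (MeasurableSpace.comap (d ∘ X) inferInstance) μ Y0 ω * (1 - ed ω) - condCov μ (MeasurableSpace.comap (d ∘ X) inferInstance) Y0 T ω := by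
        simp only [Pi.sub_apply] at hcs
        rw [hcs, hTY0comm]
        simp only [condCov, hT_eq]
        ring
      show g ω * condExp (MeasurableSpace.comap (d ∘ X) inferInstance) μ f ω = _
      rw [hfv, hg_def]
      field_simp
    calc (∫ ω, (1 - T ω) * Y0 ω / (1 - ed ω) ∂μ) = ∫ ω, (g * f) ω ∂μ := by rw [hfc]
    _ = ∫ ω, condExp (MeasurableSpace.comap (d ∘ X) inferInstance) μ (g * f) ω ∂μ := (integral_condExp hm).symm
    _ = ∫ ω, (condExp (MeasurableSpace.comap (d ∘ X) inferInstance) μ Y0 ω - condCov μ (MeasurableSpace.comap (d ∘ X) inferInstance) Y0 T ω / (1 - ed ω)) ∂μ :=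
        integral_congr_ae (hcond.trans heq)
    _ = (∫ ω, condExp (MeasurableSpace.comap (d ∘ X) inferInstance) μ Y0 ω ∂μ) - ∫ ω, condCov μ (MeasurableSpace.comap (d ∘ X) inferInstance) Y0 T ω / (1 - ed ω) ∂μ :=
        integral_sub integrable_condExp hInt4
    _ = (∫ ω, Y0 ω ∂μ) - ∫ ω, condCov μ (MeasurableSpace.comap (d ∘ X) inferInstance) Y0 T ω / (1 - ed ω) ∂μ := by
        rw [integral_condExp hm]
  have hsum : (∫ ω, (condCov μ (MeasurableSpace.comap (d ∘ X) inferInstance) Y1 T ω / ed ω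
        + condCov μ (MeasurableSpace.comap (d ∘ X) inferInstance) Y0 T ω / (1 - ed ω)) ∂μ)
      = (∫ ω, condCov μ (MeasurableSpace.comap (d ∘ X) inferInstance) Y1 T ω / ed ω ∂μ)
        + ∫ ω, condCov μ (MeasurableSpace.comap (d ∘ X) inferInstance) Y0 T ω / (1 - ed ω) ∂μ :=
    integral_add hInt3 hInt4
  rw [key1, key2, hsum]
  ring
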